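/- For n ≥ 2 and every 0 < i ≤ 2^r with binary expansion i = 2^{k_0} + 2^{k_1} + ⋯ + 2^{k_s}, where k_0 > k_1 > ⋯ > k_s ≥ 0: N_r(i) = Σ_{j=0}^{s} n^{k_j}·(n−1)^j. -/

import Mathlib

/-- Whether the `j`-th coordinate of the edge `e` equals the distinguished vertex
(the first vertex of its side, representing `v_{j+1} = 1`). -/
def vcond {n r : ℕ} (e : Fin r → Fin n) (j : ℕ) : Bool :=
  if h : j < r then decide ((e ⟨j, h⟩ : ℕ) = 0) else false

/-- The nested condition `v_{j+1} ∈ e σ₁ (v_{j+2} ∈ e σ₂ (⋯))` determined by a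
sequence `σ` over `{∧, ∨}` (where `false` encodes `∧` and `true` encodes `∨`). -/
def edgeCond {n r : ℕ} (e : Fin r → Fin n) : ℕ → List Bool → Bool
  | j, [] => vcond e j
  | j, false :: s => vcond e j && edgeCond e (j + 1) s
  | j, true :: s => vcond e j || edgeCond e (j + 1) s

/-- `F_r(σ)`: the set of edges of `[n]^r` satisfying the nested condition given by `σ`. -/
def Fset (n r : ℕ) (σ : List Bool) : Finset (Fin r → Fin n) :=
  Finset.univ.filter (fun e => edgeCond e 0 σ = true)

/-- `f_r(σ) = |F_r(σ)|`. -/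
def fval (n r : ℕ) (σ : List Bool) : ℕ := (Fset n r σ).card

/-- `Ψ_r`: the sequences over `{∧, ∨}` of length at most `r - 1`. -/
def PsiSet (r : ℕ) : Finset (List Bool) :=
  (Finset.range r).biUnion (fun m => (Finset.univ : Finset (Fin m → Bool)).image List.ofFn)

/-- The set of values `{f_r(σ) : σ ∈ Σ_r}`, where `f_r(α) = 0` and `f_r(ω) = n ^ r`. -/
def Nvals (n r : ℕ) : Finset ℕ :=
  insert 0 (insert (n ^ r) ((PsiSet r).image (fval n r)))

/-- `N_r(i)`: the `(i+1)`-st smallest element of `{f_r(σ) : σ ∈ Σ_r}`. -/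
def Nseq (n r i : ℕ) : ℕ := (Finset.sort (Nvals n r) (· ≤ ·)).getD i 0


def gfun (n : ℕ) : ℕ → ℕ
  | 0 => 0
  | (i+1) => n ^ Nat.log 2 (i+1) + (n-1) * gfun n ((i+1) - 2 ^ Nat.log 2 (i+1))
  decreasing_by
    have h1 : 1 ≤ 2 ^ Nat.log 2 (i+1) := Nat.one_le_two_pow
    omega

lemma gfun_pow_add {n k t : ℕ} (ht : t < 2 ^ k) :
    gfun n (2 ^ k + t) = n ^ k + (n - 1) * gfun n t := by
  have h1 : 1 ≤ 2 ^ k := Nat.one_le_two_pow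
  obtain ⟨i, hi⟩ : ∃ i, 2 ^ k + t = i + 1 := ⟨2 ^ k + t - 1, by omega⟩
  have hlog : Nat.log 2 (2 ^ k + t) = k := by
    apply Nat.log_eq_of_pow_le_of_lt_pow
    · omega
    · rw [pow_succ]; omega
  rw [hi, gfun, ← hi, hlog]
  congr 2
  simp

lemma gfun_pow {n k : ℕ} : gfun n (2 ^ k) = n ^ k := by
  have := gfun_pow_add (n := n) (k := k) (t := 0) (Nat.pow_pos (by norm_num))
  simpa [gfun] using this

lemma gfun_lt_pow {n : ℕ} (hn : 2 ≤ n) : ∀ i k, i < 2 ^ k → gfun n i < n ^ k := by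
  intro i
  induction i using Nat.strong_induction_on with
  | _ i IH =>
    intro k hik
    match i, hik with
    | 0, _ => simpa [gfun] using Nat.pow_pos (n := k) (show 0 < n by omega)
    | (i+1), hik =>
      set j := Nat.log 2 (i+1) with hj
      have h2j : 2 ^ j ≤ i + 1 := Nat.pow_log_le_self 2 (by omega)
      have hlt : i + 1 < 2 ^ (j+1) := Nat.lt_pow_succ_log_self (by norm_num) _
      have hjk : j < k := by
        by_contra h
        have : 2 ^ k ≤ 2 ^ j := Nat.pow_le_pow_right (by norm_num) (by omega)
        omega
      have hrec : gfun n (i+1) = n ^ j + (n-1) * gfun n ((i+1) - 2 ^ j) := by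
        rw [gfun]
      have hsub : (i+1) - 2 ^ j < 2 ^ j := by rw [pow_succ] at hlt; omega
      have hIH := IH ((i+1) - 2 ^ j) (by omega) j hsub
      have : gfun n (i+1) < n ^ j + (n-1) * n ^ j := by
        rw [hrec]
        have hn1 : 0 < n - 1 := by omega
        exact Nat.add_lt_add_left (Nat.mul_lt_mul_of_pos_left hIH hn1) _
      calc gfun n (i+1) < n ^ j + (n-1) * n ^ j := this
        _ = n ^ (j+1) := by
            have : n ^ j + (n-1) * n ^ j = n * n ^ j := by
              have h := Nat.succ_pred_eq_of_pos (show 0 < n by omega)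
              nlinarith [Nat.sub_add_cancel (show 1 ≤ n by omega)]
            rw [this, pow_succ, Nat.mul_comm]
        _ ≤ n ^ k := Nat.pow_le_pow_right (by omega) (by omega)

lemma gfun_strictMono {n : ℕ} (hn : 2 ≤ n) : StrictMono (gfun n) := by
  have key : ∀ b a, a < b → gfun n a < gfun n b := by
    intro b
    induction b using Nat.strong_induction_on with
    | _ b IH =>
      intro a hab
      obtain ⟨i, rfl⟩ : ∃ i, b = i + 1 := ⟨b - 1, by omega⟩
      set j := Nat.log 2 (i+1) with hj
      have h2j : 2 ^ j ≤ i + 1 := Nat.pow_log_le_self 2 (by omega)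
      have hlt : i + 1 < 2 ^ (j+1) := Nat.lt_pow_succ_log_self (by norm_num) _
      have hsub : (i+1) - 2 ^ j < 2 ^ j := by rw [pow_succ] at hlt; omega
      have hrec : gfun n (i+1) = n ^ j + (n-1) * gfun n ((i+1) - 2 ^ j) := by rw [gfun]
      by_cases ha : a < 2 ^ j
      · have := gfun_lt_pow hn a j ha
        omega
      · have h2 : gfun n a = n ^ j + (n-1) * gfun n (a - 2 ^ j) := by
          have : a = 2 ^ j + (a - 2 ^ j) := by omega
          conv_lhs => rw [this]
          rw [gfun_pow_add (by omega), this]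
        have hIH := IH ((i+1) - 2 ^ j) (by omega) (a - 2 ^ j) (by omega)
        have hn1 : 0 < n - 1 := by omega
        rw [h2, hrec]
        exact Nat.add_lt_add_left (Nat.mul_lt_mul_of_pos_left hIH hn1) _
  intro a b hab; exact key b a hab

lemma vcond_cons_succ {n r : ℕ} (x : Fin n) (f : Fin r → Fin n) (j : ℕ) :
    vcond (Fin.cons x f : Fin (r+1) → Fin n) (j+1) = vcond f j := by
  unfold vcond
  by_cases h : j < r
  · rw [dif_pos (by omega), dif_pos h]
    congr 1
  · rw [dif_neg (by omega), dif_neg h]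

lemma vcond_cons_zero {n r : ℕ} (x : Fin n) (f : Fin r → Fin n) :
    vcond (Fin.cons x f : Fin (r+1) → Fin n) 0 = decide ((x : ℕ) = 0) := by
  unfold vcond
  rw [dif_pos (by omega)]
  congr 1

lemma edgeCond_cons {n r : ℕ} (x : Fin n) (f : Fin r → Fin n) (s : List Bool) (j : ℕ) :
    edgeCond (Fin.cons x f : Fin (r+1) → Fin n) (j+1) s = edgeCond f j s := by
  induction s generalizing j with
  | nil => exact vcond_cons_succ x f j
  | cons b t IH =>
    cases b <;> simp only [edgeCond, vcond_cons_succ, IH]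

-- cardinal helper: filter on (Fin (r+1) → Fin n) via product
lemma card_filter_cons (n r : ℕ) (p : (Fin (r+1) → Fin n) → Bool) :
    (Finset.univ.filter (fun e => p e = true)).card
      = (Finset.univ.filter (fun q : Fin n × (Fin r → Fin n) => p (Fin.cons q.1 q.2) = true)).card := by
  symm
  apply Finset.card_bij (fun (q : Fin n × (Fin r → Fin n)) (_ : q ∈ Finset.univ.filter (fun q : Fin n × (Fin r → Fin n) => p (Fin.cons q.1 q.2) = true)) => (Fin.cons q.1 q.2 : Fin (r+1) → Fin n))
  · intro q hq
    simp only [Finset.mem_filter, Finset.mem_univ, true_and] at hq ⊢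
    exact hq
  · intro a ha b hb hab
    have h1 : a.1 = b.1 := by
      have := congrArg (fun e => e 0) hab
      simpa using this
    have h2 : a.2 = b.2 := by
      funext i
      have := congrArg (fun e => e i.succ) hab
      simpa using this
    exact Prod.ext h1 h2
  · intro e he
    refine ⟨(e 0, Fin.tail e), ?_, ?_⟩
    · simp only [Finset.mem_filter, Finset.mem_univ, true_and] at he ⊢
      rwa [Fin.cons_self_tail]
    · exact Fin.cons_self_tail e

lemma card_fin_zero {n : ℕ} (hn : 1 ≤ n) :
    (Finset.univ.filter (fun x : Fin n => ((x:ℕ) = 0))).card = 1 := by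
  obtain ⟨m, rfl⟩ : ∃ m, n = m + 1 := ⟨n - 1, by omega⟩
  have h : (Finset.univ.filter (fun x : Fin (m+1) => ((x:ℕ) = 0))) = {0} := by
    ext x
    simp only [Finset.mem_filter, Finset.mem_univ, true_and, Finset.mem_singleton, Fin.ext_iff, Fin.val_zero]
  rw [h, Finset.card_singleton]

lemma fval_nil (n r : ℕ) (hn : 1 ≤ n) : fval n (r+1) [] = n ^ r := by
  unfold fval Fset
  rw [card_filter_cons]
  have h : Finset.univ.filter (fun q : Fin n × (Fin r → Fin n) => edgeCond (Fin.cons q.1 q.2) 0 [] = true)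
      = (Finset.univ.filter (fun x : Fin n => ((x:ℕ) = 0))) ×ˢ (Finset.univ : Finset (Fin r → Fin n)) := by
    ext q
    simp [edgeCond, vcond_cons_zero]
  rw [h, Finset.card_product, card_fin_zero hn]
  simp [Finset.card_univ]

lemma fval_cons_false (n r : ℕ) (hn : 1 ≤ n) (s : List Bool) :
    fval n (r+1) (false :: s) = fval n r s := by
  unfold fval Fset
  rw [card_filter_cons]
  have h : Finset.univ.filter
        (fun q : Fin n × (Fin r → Fin n) => edgeCond (Fin.cons q.1 q.2) 0 (false :: s) = true)
      = (Finset.univ.filter (fun x : Fin n => ((x:ℕ) = 0)))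
          ×ˢ (Finset.univ.filter (fun f : Fin r → Fin n => edgeCond f 0 s = true)) := by
    ext q
    simp [edgeCond, vcond_cons_zero, edgeCond_cons, Finset.mem_product]
  rw [h, Finset.card_product, card_fin_zero hn, one_mul]

lemma fval_cons_true (n r : ℕ) (hn : 1 ≤ n) (s : List Bool) :
    fval n (r+1) (true :: s) = n ^ r + (n - 1) * fval n r s := by
  unfold fval Fset
  rw [card_filter_cons]
  have hcompl : Finset.univ.filter
        (fun q : Fin n × (Fin r → Fin n) => ¬ (edgeCond (Fin.cons q.1 q.2) 0 (true :: s) = true))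
      = (Finset.univ.filter (fun x : Fin n => ¬ ((x:ℕ) = 0)))
          ×ˢ (Finset.univ.filter (fun f : Fin r → Fin n => ¬ (edgeCond f 0 s = true))) := by
    ext q
    simp [edgeCond, vcond_cons_zero, edgeCond_cons, Finset.mem_product]
  have hsplit := Finset.card_filter_add_card_filter_not
    (s := (Finset.univ : Finset (Fin n × (Fin r → Fin n))))
    (p := fun q => edgeCond (Fin.cons q.1 q.2) 0 (true :: s) = true)
  have hsplit2 := Finset.card_filter_add_card_filter_not
    (s := (Finset.univ : Finset (Fin r → Fin n)))
    (p := fun f => edgeCond f 0 s = true)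
  have hx : (Finset.univ.filter (fun x : Fin n => ¬ ((x:ℕ) = 0))).card = n - 1 := by
    have := Finset.card_filter_add_card_filter_not
      (s := (Finset.univ : Finset (Fin n))) (p := fun x => ((x:ℕ) = 0))
    rw [card_fin_zero hn] at this
    simp only [Finset.card_univ, Fintype.card_fin] at this
    omega
  rw [hcompl, Finset.card_product, hx] at hsplit
  simp only [Finset.card_univ, Fintype.card_fin, Fintype.card_prod,
    Fintype.card_fun] at hsplit hsplit2
  set T := (Finset.univ.filter
      (fun q : Fin n × (Fin r → Fin n) => edgeCond (Fin.cons q.1 q.2) 0 (true :: s) = true)).card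
    with hT
  set F := (Finset.univ.filter (fun f : Fin r → Fin n => edgeCond f 0 s = true)).card with hF
  set C := (Finset.univ.filter (fun f : Fin r → Fin n => ¬ (edgeCond f 0 s = true))).card with hC
  show T = n ^ r + (n - 1) * F
  have hnn : n * n ^ r = n ^ r + (n-1) * n ^ r := by
    have h1 : n = 1 + (n - 1) := by omega
    calc n * n ^ r = (1 + (n-1)) * n ^ r := by rw [← h1]
      _ = n ^ r + (n-1) * n ^ r := by ring
  have hmul : (n-1) * C + (n-1) * F = (n-1) * n ^ r := by
    rw [← Nat.mul_add, Nat.add_comm C F, hsplit2]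
  set A := n ^ r with hA
  set P := (n-1) * C with hP
  set Q := (n-1) * F with hQ
  set R := (n-1) * A with hR
  set N := n * A with hN
  omega

lemma mem_PsiSet {r : ℕ} {σ : List Bool} : σ ∈ PsiSet r ↔ σ.length < r := by
  unfold PsiSet
  simp only [Finset.mem_biUnion, Finset.mem_range, Finset.mem_image, Finset.mem_univ, true_and]
  constructor
  · rintro ⟨m, hm, f, rfl⟩
    simpa using hm
  · intro h
    exact ⟨σ.length, h, σ.get, List.ofFn_get σ⟩

def idx : ℕ → List Bool → ℕ
  | r, [] => 2 ^ (r-1)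
  | r, (b::s) => (if b then 2 ^ (r-1) else 0) + idx (r-1) s

lemma idx_bounds : ∀ (σ : List Bool) (r : ℕ), σ.length < r → 1 ≤ idx r σ ∧ idx r σ < 2 ^ r := by
  intro σ
  induction σ with
  | nil =>
    intro r hr
    have h1 : 1 ≤ r := by simp at hr; omega
    have : idx r [] = 2 ^ (r-1) := rfl
    rw [this]
    constructor
    · exact Nat.one_le_two_pow
    · exact Nat.pow_lt_pow_right (by norm_num) (by omega)
  | cons b s IH =>
    intro r hr
    have h1 : s.length < r - 1 := by simp at hr; omega
    obtain ⟨ih1, ih2⟩ := IH (r-1) h1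
    have h2 : 2 ≤ r := by simp at hr; omega
    have hid : idx r (b::s) = (if b then 2 ^ (r-1) else 0) + idx (r-1) s := rfl
    have hpow : 2 ^ (r-1) + 2 ^ (r-1) = 2 ^ r := by
      have : r - 1 + 1 = r := by omega
      conv_rhs => rw [← this]
      rw [pow_succ]; omega
    rw [hid]
    cases b
    · rw [if_neg (by simp)]; omega
    · rw [if_pos rfl]; omega

def buildσ : ℕ → ℕ → List Bool
  | 0, _ => []
  | (r+1), i => if i = 2^r then [] else if 2^r < i then true :: buildσ r (i - 2^r) else false :: buildσ r i

lemma build_spec : ∀ (r i : ℕ), 0 < i → i < 2 ^ r →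
    (buildσ r i).length < r ∧ idx r (buildσ r i) = i := by
  intro r
  induction r with
  | zero => intro i h1 h2; omega
  | succ r IH =>
    intro i h1 h2
    rw [pow_succ] at h2
    by_cases he : i = 2^r
    · subst he
      constructor
      · simp [buildσ]
      · simp [buildσ, idx]
    · by_cases hgt : 2^r < i
      · have hpos : 0 < i - 2^r := by omega
        have hlt : i - 2^r < 2^r := by omega
        obtain ⟨ih1, ih2⟩ := IH (i - 2^r) hpos hlt
        have hb : buildσ (r+1) i = true :: buildσ r (i - 2^r) := by
          rw [buildσ, if_neg he, if_pos hgt]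
        rw [hb]
        constructor
        · simpa using ih1
        · have : idx (r+1) (true :: buildσ r (i - 2^r))
              = 2 ^ r + idx r (buildσ r (i - 2^r)) := by
            simp [idx]
          rw [this, ih2]
          omega
      · have hlt : i < 2^r := by omega
        obtain ⟨ih1, ih2⟩ := IH i h1 hlt
        have hb : buildσ (r+1) i = false :: buildσ r i := by
          rw [buildσ, if_neg he, if_neg hgt]
        rw [hb]
        constructor
        · simpa using ih1
        · have : idx (r+1) (false :: buildσ r i) = idx r (buildσ r i) := by simp [idx]
          rw [this, ih2]

lemma fval_eq_g : ∀ (σ : List Bool) (n r : ℕ), 2 ≤ n → σ.length < r →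
    fval n r σ = gfun n (idx r σ) := by
  intro σ
  induction σ with
  | nil =>
    intro n r hn hr
    obtain ⟨r', rfl⟩ : ∃ r', r = r' + 1 := ⟨r - 1, by omega⟩
    show fval n (r'+1) [] = gfun n (2 ^ ((r'+1)-1))
    rw [fval_nil n r' (by omega)]
    simp [gfun_pow]
  | cons b s IH =>
    intro n r hn hr
    obtain ⟨r', rfl⟩ : ∃ r', r = r' + 1 := ⟨r - 1, by omega⟩
    have hs : s.length < r' := by simp at hr; omega
    have hIH := IH n r' hn hs
    obtain ⟨hb1, hb2⟩ := idx_bounds s r' hs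
    cases b
    · show fval n (r'+1) (false :: s) = gfun n (idx (r'+1) (false :: s))
      rw [fval_cons_false n r' (by omega) s, hIH]
      congr 1
      simp [idx]
    · show fval n (r'+1) (true :: s) = gfun n (idx (r'+1) (true :: s))
      rw [fval_cons_true n r' (by omega) s, hIH]
      have h1 : idx (r'+1) (true :: s) = 2 ^ r' + idx r' s := by simp [idx]
      rw [h1, gfun_pow_add hb2]

lemma Nvals_eq (n r : ℕ) (hn : 2 ≤ n) :
    Nvals n r = (Finset.range (2 ^ r + 1)).image (gfun n) := by
  apply Finset.Subset.antisymm
  · intro x hx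
    simp only [Nvals, Finset.mem_insert, Finset.mem_image] at hx
    rcases hx with rfl | rfl | ⟨σ, hσ, rfl⟩
    · exact Finset.mem_image.mpr ⟨0, Finset.mem_range.mpr (Nat.succ_pos _), by simp [gfun]⟩
    · exact Finset.mem_image.mpr ⟨2 ^ r, Finset.mem_range.mpr (Nat.lt_succ_self _), gfun_pow⟩
    · rw [mem_PsiSet] at hσ
      obtain ⟨h1, h2⟩ := idx_bounds σ r hσ
      exact Finset.mem_image.mpr ⟨idx r σ, Finset.mem_range.mpr (Nat.lt_succ_of_lt h2),
        (fval_eq_g σ n r hn hσ).symm⟩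
  · intro x hx
    simp only [Finset.mem_image, Finset.mem_range] at hx
    obtain ⟨i, hi, rfl⟩ := hx
    by_cases h0 : i = 0
    · subst h0; simp [Nvals, gfun]
    · by_cases hr : i = 2 ^ r
      · subst hr
        simp [Nvals, gfun_pow]
      · have hlt : i < 2 ^ r := by omega
        obtain ⟨hb1, hb2⟩ := build_spec r i (by omega) hlt
        have hmem : buildσ r i ∈ PsiSet r := mem_PsiSet.mpr hb1
        have : gfun n i = fval n r (buildσ r i) := by
          rw [fval_eq_g (buildσ r i) n r hn hb1, hb2]
        rw [this]
        simp only [Nvals, Finset.mem_insert, Finset.mem_image]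
        exact Or.inr (Or.inr ⟨buildσ r i, hmem, rfl⟩)

lemma sort_Nvals (n r : ℕ) (hn : 2 ≤ n) :
    Finset.sort (Nvals n r) (· ≤ ·) = (List.range (2 ^ r + 1)).map (gfun n) := by
  set M := (List.range (2 ^ r + 1)).map (gfun n) with hM
  have hnd : M.Nodup := (List.nodup_range (n := _)).map (gfun_strictMono hn).injective
  have hsorted : M.Pairwise (· ≤ ·) := by
    have h1 : List.Pairwise (· < ·) (List.range (2 ^ r + 1)) := List.pairwise_lt_range (n := _)
    have h2 : List.Pairwise (· < ·) M := List.Pairwise.map _ (fun a b h => gfun_strictMono hn h) h1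
    exact h2.imp le_of_lt
  have hperm : (Finset.sort (Nvals n r) (· ≤ ·)).Perm M := by
    apply List.perm_of_nodup_nodup_toFinset_eq (Finset.sort_nodup _ _) hnd
    rw [Finset.sort_toFinset]
    rw [hM]
    have : ((List.range (2 ^ r + 1)).map (gfun n)).toFinset
        = (List.range (2 ^ r + 1)).toFinset.image (gfun n) := by
      ext x; simp
    have h2 : (List.range (2 ^ r + 1)).toFinset = Finset.range (2 ^ r + 1) := by
      ext x; simp
    rw [this, h2]
    exact Nvals_eq n r hn
  exact hperm.eq_of_pairwise' (Finset.pairwise_sort _ _) hsorted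

lemma Nseq_eq (n r i : ℕ) (hn : 2 ≤ n) (hi : i ≤ 2 ^ r) : Nseq n r i = gfun n i := by
  unfold Nseq
  rw [sort_Nvals n r hn]
  have hlen : i < ((List.range (2 ^ r + 1)).map (gfun n)).length := by
    simp; omega
  rw [List.getD_eq_getElem _ _ hlen]
  simp

lemma sum_pow_lt (L : List ℕ) (k : ℕ) (hL : L.Pairwise (· > ·)) (hk : ∀ x ∈ L, x < k) :
    ∑ j ∈ Finset.range L.length, 2 ^ L.getD j 0 < 2 ^ k := by
  induction L generalizing k with
  | nil => simpa using Nat.one_le_two_pow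
  | cons a t IH =>
    rw [List.pairwise_cons] at hL
    have ha : a < k := hk a (by simp)
    have ht : ∀ x ∈ t, x < a := hL.1
    have hIH := IH a hL.2 ht
    have hlen : (a :: t).length = t.length + 1 := rfl
    rw [hlen, Finset.sum_range_succ']
    simp only [List.getD_cons_succ, List.getD_cons_zero]
    have h2 : 2 ^ (a+1) ≤ 2 ^ k := Nat.pow_le_pow_right (by norm_num) (by omega)
    rw [pow_succ] at h2
    omega

lemma gfun_sum (n : ℕ) (L : List ℕ) (hL : L.Pairwise (· > ·)) :
    gfun n (∑ j ∈ Finset.range L.length, 2 ^ L.getD j 0)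
      = ∑ j ∈ Finset.range L.length, n ^ L.getD j 0 * (n - 1) ^ j := by
  induction L with
  | nil => simp [gfun]
  | cons a t IH =>
    rw [List.pairwise_cons] at hL
    have hts : ∑ j ∈ Finset.range t.length, 2 ^ t.getD j 0 < 2 ^ a :=
      sum_pow_lt t a hL.2 hL.1
    have hlen : (a :: t).length = t.length + 1 := rfl
    rw [hlen, Finset.sum_range_succ', Finset.sum_range_succ']
    simp only [List.getD_cons_succ, List.getD_cons_zero]
    rw [Nat.add_comm  (∑ j ∈ Finset.range t.length, 2 ^ t.getD j 0) (2 ^ a),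
      gfun_pow_add hts, IH hL.2]
    rw [Finset.mul_sum]
    have : ∀ j, (n-1) * (n ^ t.getD j 0 * (n-1) ^ j) = n ^ t.getD j 0 * (n-1) ^ (j+1) := by
      intro j; ring
    simp only [this]
    rw [pow_zero, mul_one]
    omega

theorem stmt13 (n r : ℕ) (hn : 2 ≤ n) (L : List ℕ) (hL : L.Pairwise (· > ·))
    (hpos : 0 < ∑ j ∈ Finset.range L.length, 2 ^ L.getD j 0)
    (hle : ∑ j ∈ Finset.range L.length, 2 ^ L.getD j 0 ≤ 2 ^ r) :
    Nseq n r (∑ j ∈ Finset.range L.length, 2 ^ L.getD j 0) =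
      ∑ j ∈ Finset.range L.length, n ^ L.getD j 0 * (n - 1) ^ j := by
  have hi : (∑ j ∈ Finset.range L.length, 2 ^ L.getD j 0) ≤ 2 ^ r := hle
  rw [Nseq_eq n r _ hn hi, gfun_sum n L hL]
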